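/- Every fractionally Tw-fragile class of graphs with bounded maximum degree is fractionally Vs-fragile. -/

import Mathlib

open Classical Filter

attribute [local instance] Classical.propDecidable

noncomputable section

/-- A finite graph, bundled with its (finite) vertex type. -/
structure FGraph : Type 1 where
  V : Type
  [fin : Fintype V]
  G : SimpleGraph V

attribute [instance] FGraph.fin

namespace FGraph

/-- The number of vertices. -/
def card (G : FGraph) : ℕ := Fintype.card G.V

/-- The number of edges. -/
def edgeCount (G : FGraph) : ℕ := G.G.edgeSet.ncard

/-- The edge density `|E(G)|/|V(G)|`. -/
def density (G : FGraph) : ℝ := (G.edgeCount : ℝ) / (G.card : ℝ)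

/-- `G − X`: the subgraph induced by the complement of `X`. -/
def del (G : FGraph) (X : Set G.V) : FGraph := ⟨↥(Xᶜ), G.G.induce (Xᶜ : Set G.V)⟩

/-- `H` is (isomorphic to) a subgraph of `G`. -/
def IsSubgraphOf (H G : FGraph) : Prop :=
  ∃ f : H.V → G.V, Function.Injective f ∧ ∀ a b, H.G.Adj a b → G.G.Adj (f a) (f b)

/-- The class `C` is closed under taking subgraphs. -/
def SubgraphClosed (C : Set FGraph) : Prop :=
  ∀ G ∈ C, ∀ H : FGraph, IsSubgraphOf H G → H ∈ C

/-- `G` has maximum degree at most `d`. -/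
def maxDegLE (G : FGraph) (d : ℕ) : Prop := ∀ v : G.V, (G.G.neighborSet v).ncard ≤ d

/-- The maximum degree of `G`. -/
def maxDeg (G : FGraph) : ℕ := Finset.univ.sup fun v : G.V => (G.G.neighborSet v).ncard

/-- The class `C` has bounded maximum degree. -/
def BddMaxDeg (C : Set FGraph) : Prop := ∃ Δ : ℕ, ∀ G ∈ C, G.maxDegLE Δ

/-- `H` is a `d`-minor of `G`: obtained by contracting pairwise disjoint subgraphs of
radius at most `d` (the branch sets `B w`) and deleting vertices and edges. -/
def IsMinor (d : ℕ) (H G : FGraph) : Prop :=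
  ∃ B : H.V → Set G.V,
    (∀ w, (B w).Nonempty) ∧
    (Pairwise fun w w' => Disjoint (B w) (B w')) ∧
    (∀ w : H.V, ∃ v ∈ B w, ∀ u ∈ B w, ∃ p : G.G.Walk v u,
      p.length ≤ d ∧ ∀ x ∈ p.support, x ∈ B w) ∧
    (∀ w w' : H.V, H.G.Adj w w' → ∃ v ∈ B w, ∃ v' ∈ B w', G.G.Adj v v')

/-- The complete graph `K_t` as a bundled finite graph. -/
def completeFG (t : ℕ) : FGraph := ⟨Fin t, ⊤⟩

/-- The set of densities of `k`-minors of graphs in the class `C`. -/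
def densSet (k : ℕ) (C : Set FGraph) : Set ℝ :=
  {r | ∃ G ∈ C, ∃ H : FGraph, IsMinor k H G ∧ r = H.density}

/-- `∇_k(C)`: the supremum of densities of `k`-minors of graphs in `C`. -/
def nablaClass (k : ℕ) (C : Set FGraph) : ℝ := sSup (densSet k C)

/-- `G` has a balanced separation of size at most `s`. -/
def SepAtMost (G : FGraph) (s : ℕ) : Prop :=
  ∃ A B : G.G.Subgraph, A ⊔ B = ⊤ ∧ Disjoint A.edgeSet B.edgeSet ∧
    3 * (A.verts \ B.verts).ncard ≤ 2 * G.card ∧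
    3 * (B.verts \ A.verts).ncard ≤ 2 * G.card ∧
    (A.verts ∩ B.verts).ncard ≤ s

/-- `s_C(n)`: the smallest `s` such that every graph in `C` with at most `n` vertices
has a balanced separation of size at most `s`. -/
def sepf (C : Set FGraph) (n : ℕ) : ℕ :=
  sInf {s | ∀ G ∈ C, G.card ≤ n → SepAtMost G s}

/-- The class `C` has sublinear separators. -/
def SublinearSep (C : Set FGraph) : Prop :=
  Tendsto (fun n : ℕ => (sepf C n : ℝ) / (n : ℝ)) atTop (nhds 0)

/-- The class `C` has strongly sublinear separators. -/
def StronglySublinearSep (C : Set FGraph) : Prop :=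
  ∃ c δ : ℝ, 1 ≤ c ∧ 0 ≤ δ ∧ δ < 1 ∧ ∀ n : ℕ, (sepf C n : ℝ) ≤ c * (n : ℝ) ^ δ

/-- The number of vertices of the connected component of `v`. -/
def compSize (G : FGraph) (v : G.V) : ℕ := ((G.G.connectedComponentMk v).supp).ncard

/-- `G` has a fractional `C`-complementary packing of thickness at most `ε`. -/
def FracPack (G : FGraph) (C : Set FGraph) (ε : ℝ) : Prop :=
  ∃ π : Finset G.V → ℝ,
    (∀ X, 0 ≤ π X) ∧
    (∑ X : Finset G.V, π X = 1) ∧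
    (∀ X : Finset G.V, π X ≠ 0 → G.del (↑X : Set G.V) ∈ C) ∧
    (∀ v : G.V, ∑ X ∈ Finset.univ.filter (fun X : Finset G.V => v ∈ X), π X ≤ ε)

/-- `C` is an `ε`-witness for the class `Gc`: every graph in `Gc` has a fractional
`C`-complementary packing of thickness at most `ε`. -/
def Witness (C Gc : Set FGraph) (ε : ℝ) : Prop := ∀ G ∈ Gc, FracPack G C ε

/-- `Gc` is fractionally `P`-fragile. -/
def FracFragile (P : Set (Set FGraph)) (Gc : Set FGraph) : Prop :=
  ∀ ε : ℝ, 0 < ε → ∃ C ∈ P, Witness C Gc ε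

/-- The class property `Vs` of all graph classes with bounded component size. -/
def Vs : Set (Set FGraph) := {C | ∃ t : ℕ, ∀ G ∈ C, ∀ v : G.V, G.compSize v ≤ t}

/-- `(T, β)` is a tree decomposition of `G`. -/
def IsTreeDecomp (G : FGraph) {ι : Type} (T : SimpleGraph ι) (β : ι → Set G.V) : Prop :=
  T.IsTree ∧
  (∀ v : G.V, ∃ u, v ∈ β u) ∧
  (∀ v w : G.V, G.G.Adj v w → ∃ u, v ∈ β u ∧ w ∈ β u) ∧
  (∀ v : G.V, (T.induce {u | v ∈ β u}).Connected)

/-- `G` has treewidth at most `k`. -/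
def twLE (G : FGraph) (k : ℕ) : Prop :=
  ∃ (ι : Type) (_ : Fintype ι) (T : SimpleGraph ι) (β : ι → Set G.V),
    IsTreeDecomp G T β ∧ ∀ u, (β u).ncard ≤ k + 1

/-- The treewidth of `G`. -/
def treewidth (G : FGraph) : ℕ := sInf {k | twLE G k}

/-- The class property `Tw` of all graph classes with bounded treewidth. -/
def Tw : Set (Set FGraph) := {C | ∃ k : ℕ, ∀ G ∈ C, twLE G k}

end FGraph

set_option maxHeartbeats 1000000
set_option linter.unusedSectionVars false
open SimpleGraph
namespace DO

variable {V : Type} [Fintype V] (G : SimpleGraph V)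

/-- The graph `G` punctured to the vertex set `X`. -/
def pG (X : Finset V) : SimpleGraph V where
  Adj u v := G.Adj u v ∧ u ∈ X ∧ v ∈ X
  symm := ⟨by rintro a b ⟨h, ha, hb⟩; exact ⟨h.symm, hb, ha⟩⟩
  loopless := ⟨fun a h => h.1.ne rfl⟩

/-- Reachability within `X`. -/
def Rch (X : Finset V) (u v : V) : Prop := (pG G X).Reachable u v

variable {G}

lemma pG_le {X Y : Finset V} (h : X ⊆ Y) : pG G X ≤ pG G Y := by
  rintro a b ⟨hab, ha, hb⟩; exact ⟨hab, h ha, h hb⟩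

lemma Rch.refl {X : Finset V} (v : V) : Rch G X v v := Reachable.refl v

lemma Rch.lsymm {X : Finset V} {u v : V} (h : Rch G X u v) : Rch G X v u :=
  Reachable.symm h

lemma Rch.ltrans {X : Finset V} {u v w : V} (h : Rch G X u v) (h' : Rch G X v w) :
    Rch G X u w := Reachable.trans h h'

lemma Rch.mono {X Y : Finset V} (hXY : X ⊆ Y) {u v : V} (h : Rch G X u v) :
    Rch G Y u v := Reachable.mono (pG_le hXY) h

lemma Rch.mem_or_eq {X : Finset V} {u v : V} (h : Rch G X u v) : u ∈ X ∨ u = v := by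
  obtain ⟨p⟩ := h
  cases p with
  | nil => exact Or.inr rfl
  | cons h q => exact Or.inl h.2.1

/-- walk-closure induction: transfer reachability to a smaller vertex set. -/
lemma rch_transfer_support {X Y : Finset V} :
    ∀ {u x : V} (p : (pG G X).Walk u x), (∀ w ∈ p.support, w ∈ X → w ∈ Y) →
      Rch G Y u x := by
  intro u x p
  induction p with
  | nil => intro _; exact Rch.refl _
  | @cons a b c h q ih =>
    intro hsup
    have ha : a ∈ Y := hsup a (by simp) h.2.1
    have hb : b ∈ Y := hsup b (by simp) h.2.2
    have : (pG G Y).Adj a b := ⟨h.1, ha, hb⟩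
    exact this.reachable.trans (ih (fun w hw hwX => hsup w (by simp [hw]) hwX))

lemma rch_mem_support {X : Finset V} {u x w : V} (p : (pG G X).Walk u x)
    (hw : w ∈ p.support) : Rch G X u w := ⟨p.takeUntil w hw⟩

/-- Transfer reachability into a subset `Y` closed under reachability from `u`. -/
lemma Rch.transfer {X Y : Finset V} {u x : V} (h : Rch G X u x)
    (hcl : ∀ w, Rch G X u w → w ∈ X → w ∈ Y) : Rch G Y u x := by
  obtain ⟨p⟩ := h
  exact rch_transfer_support p (fun w hw hwX => hcl w (rch_mem_support p hw) hwX)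

variable (G)

/-- The connected component of `v` inside `X`, as a `Finset`. -/
def cmp (X : Finset V) (v : V) : Finset V := X.filter (fun x => Rch G X v x)

variable {G}

lemma mem_cmp {X : Finset V} {v x : V} : x ∈ cmp G X v ↔ x ∈ X ∧ Rch G X v x := by
  simp [cmp]

lemma cmp_subset {X : Finset V} {v : V} : cmp G X v ⊆ X := Finset.filter_subset _ _

lemma cmp_eq_of_rch {X : Finset V} {v x : V} (h : Rch G X v x) :
    cmp G X v = cmp G X x := by
  ext y; simp only [mem_cmp]
  exact ⟨fun ⟨hy, hr⟩ => ⟨hy, h.lsymm.ltrans hr⟩, fun ⟨hy, hr⟩ => ⟨hy, h.ltrans hr⟩⟩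

lemma cmp_eq_empty_of_not_mem {X : Finset V} {v : V} (hv : v ∉ X) :
    cmp G X v = ∅ := by
  ext y; simp only [mem_cmp, Finset.notMem_empty, iff_false]
  rintro ⟨hy, hr⟩
  rcases hr.mem_or_eq with h | h
  · exact hv h
  · exact hv (h ▸ hy)

lemma mem_cmp_self {X : Finset V} {v : V} (hv : v ∈ X) : v ∈ cmp G X v :=
  mem_cmp.2 ⟨hv, Rch.refl v⟩

/-- Distinct components are disjoint. -/
lemma cmp_disjoint {X : Finset V} {v v' : V} (h : cmp G X v ≠ cmp G X v') :
    Disjoint (cmp G X v) (cmp G X v') := by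
  rw [Finset.disjoint_left]
  intro x hx hx'
  exact h ((cmp_eq_of_rch (mem_cmp.1 hx).2).trans (cmp_eq_of_rch (mem_cmp.1 hx').2).symm)

variable (G)

/-- vertices of `X` with a neighbour in `B`. -/
def nbF (B X : Finset V) : Finset V := X.filter (fun x => ∃ b ∈ B, G.Adj b x)

/-- neighbours of `v` as a Finset. -/
def nf (v : V) : Finset V := Finset.univ.filter (fun x => G.Adj v x)

variable {G}

lemma nbF_subset {B X : Finset V} : nbF G B X ⊆ X := Finset.filter_subset _ _

lemma nbF_mono {B X Y : Finset V} (h : X ⊆ Y) : nbF G B X ⊆ nbF G B Y := by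
  intro x hx
  rw [nbF, Finset.mem_filter] at hx ⊢
  exact ⟨h hx.1, hx.2⟩

lemma nbF_card_le {Δ : ℕ} (hdeg : ∀ v : V, (nf G v).card ≤ Δ) (B X : Finset V) :
    (nbF G B X).card ≤ Δ * B.card := by
  have hsub : nbF G B X ⊆ B.biUnion (fun b => nf G b) := by
    intro x hx
    rw [nbF, Finset.mem_filter] at hx
    obtain ⟨_, b, hb, hadj⟩ := hx
    exact Finset.mem_biUnion.2 ⟨b, hb, by simp [nf, hadj]⟩
  calc (nbF G B X).card ≤ (B.biUnion (fun b => nf G b)).card := Finset.card_le_card hsub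
    _ ≤ ∑ b ∈ B, (nf G b).card := Finset.card_biUnion_le
    _ ≤ ∑ _b ∈ B, Δ := Finset.sum_le_sum (fun b _ => hdeg b)
    _ = Δ * B.card := by rw [Finset.sum_const, smul_eq_mul, Nat.mul_comm]

set_option maxHeartbeats 400000
section TDwrap
/-- Support of a punctured walk is in `X`, except possibly the start. -/
lemma pg_support {X : Finset V} {b c : V} (q : (pG G X).Walk b c) :
    ∀ w ∈ q.support, w = b ∨ w ∈ X := by
  induction q with
  | nil => intro w hw; simp at hw; exact Or.inl hw
  | cons h q ih =>
    intro w hw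
    rw [Walk.support_cons, List.mem_cons] at hw
    rcases hw with hw | hw
    · exact Or.inl hw
    · rcases ih w hw with h' | h'
      · exact Or.inr (h' ▸ h.2.2)
      · exact Or.inr h'

/-- From a `T`-walk avoiding `u`, reachability in the puncture. -/
lemma rch_of_walk_avoid {u : V} {b c : V} (p : G.Walk b c)
    (h : ∀ w ∈ p.support, w ≠ u) : Rch G (Finset.univ.erase u) b c := by
  induction p with
  | nil => exact Rch.refl _
  | @cons x y z hadj q ih =>
    have hx : x ∈ Finset.univ.erase u :=
      Finset.mem_erase.2 ⟨h x (by simp), Finset.mem_univ _⟩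
    have hy : y ∈ Finset.univ.erase u :=
      Finset.mem_erase.2 ⟨h y (by simp), Finset.mem_univ _⟩
    have : (pG G (Finset.univ.erase u)).Adj x y := ⟨hadj, hx, hy⟩
    exact this.reachable.trans (ih (fun w hw => h w (by simp [hw])))

/-- From a punctured reachability, get a `T`-path avoiding `u`. -/
lemma path_avoid_of_rch {u b c : V} (h : Rch G (Finset.univ.erase u) b c)
    (hb : b ≠ u) : ∃ p : G.Walk b c, p.IsPath ∧ ∀ w ∈ p.support, w ≠ u := by
  obtain ⟨q⟩ := h
  have hsup : ∀ w ∈ q.support, w ≠ u := by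
    intro w hw
    rcases pg_support q w hw with h' | h'
    · exact h' ▸ hb
    · exact Finset.ne_of_mem_erase h'
  -- map to a G-walk
  let f : pG G (Finset.univ.erase u) →g G := ⟨id, fun h => h.1⟩
  let q' : G.Walk b c := q.map f
  have hsup' : ∀ w ∈ q'.support, w ≠ u := by
    intro w hw
    rw [Walk.support_map] at hw
    simp only [List.mem_map] at hw
    obtain ⟨x, hx, hxw⟩ := hw
    exact hxw ▸ hsup x hx
  exact ⟨q'.bypass, q'.bypass_isPath,
    fun w hw => hsup' w (Walk.support_bypass_subset _ hw)⟩

section TD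

variable {ι : Type} [Fintype ι] {T : SimpleGraph ι} {β : ι → Set V}

/-- some bag containing `v`. -/
def bag0 (hcov : ∀ v : V, ∃ u, v ∈ β u) (v : V) : ι := Classical.choose (hcov v)

lemma bag0_mem (hcov : ∀ v : V, ∃ u, v ∈ β u) (v : V) : v ∈ β (bag0 hcov v) :=
  Classical.choose_spec (hcov v)

variable (hcov : ∀ v : V, ∃ u, v ∈ β u)
variable (hconn : ∀ v : V, (T.induce {u | v ∈ β u}).Connected)

include hcov hconn in
/-- Two bags of a vertex not in `β u` are connected avoiding `u`. -/
lemma bags_rch (u : ι) (x : V) (hx : x ∉ β u) {a b : ι}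
    (ha : x ∈ β a) (hb : x ∈ β b) : Rch T (Finset.univ.erase u) a b := by
  have hr : (T.induce {c | x ∈ β c}).Reachable ⟨a, ha⟩ ⟨b, hb⟩ :=
    (hconn x).preconnected _ _
  let f : T.induce {c | x ∈ β c} →g pG T (Finset.univ.erase u) := by
    refine ⟨Subtype.val, ?_⟩
    intro p q hpq
    refine ⟨hpq, ?_, ?_⟩
    · exact Finset.mem_erase.2 ⟨fun h => hx (h ▸ p.2), Finset.mem_univ _⟩
    · exact Finset.mem_erase.2 ⟨fun h => hx (h ▸ q.2), Finset.mem_univ _⟩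
  exact hr.map f

variable (hedge : ∀ v w : V, G.Adj v w → ∃ u, v ∈ β u ∧ w ∈ β u)

include hcov hconn hedge in
/-- Adjacent vertices avoiding `β u` have `pT u`-connected bags. -/
lemma adj_bags_rch (u : ι) {x y : V} (hxy : G.Adj x y)
    (hx : x ∉ β u) (hy : y ∉ β u) :
    Rch T (Finset.univ.erase u) (bag0 hcov x) (bag0 hcov y) := by
  obtain ⟨a, hax, hay⟩ := hedge x y hxy
  exact (bags_rch hcov hconn u x hx (bag0_mem hcov x) hax).ltrans
    (bags_rch hcov hconn u y hy hay (bag0_mem hcov y))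

include hcov hconn hedge in
/-- Along a walk avoiding `β u`, the chosen bags stay `pT u`-connected. -/
lemma walk_bags_rch (u : ι) {Xs : Finset V} (hXs : ∀ w ∈ Xs, w ∉ β u)
    {v x : V} (h : Rch G Xs v x) (hv : v ∈ Xs) :
    Rch T (Finset.univ.erase u) (bag0 hcov v) (bag0 hcov x) := by
  obtain ⟨p⟩ := h
  clear hv
  induction p with
  | nil => exact Rch.refl _
  | @cons a b c hadj q ih =>
    exact (adj_bags_rch hcov hconn hedge u hadj.1 (hXs a hadj.2.1)
      (hXs b hadj.2.2)).ltrans ih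

variable {W : Finset V}

/-- vertices of `W` avoiding `β u` whose bags point towards `a` in `T - u`. -/
def Wtow (W : Finset V) (u a : ι) : Finset V :=
  W.filter (fun x => x ∉ β u ∧ Rch T (Finset.univ.erase u) (bag0 hcov x) a)

lemma Wtow_mono_target {u a a' : ι} (h : Rch T (Finset.univ.erase u) a a') :
    Wtow (T := T) hcov W u a ⊆ Wtow (T := T) hcov W u a' := by
  intro x hx
  rw [Wtow, Finset.mem_filter] at hx ⊢
  exact ⟨hx.1, hx.2.1, hx.2.2.ltrans h⟩

def Heavy (W : Finset V) (u a : ι) : Prop := 2 * (Wtow (T := T) hcov W u a).card > W.card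

include hcov in
/-- Key disjointness: a vertex cannot point towards `u'` at `u` and towards `u` at `u'`. -/
lemma claim1 (ht : T.IsTree) {u u' : ι} (hadj : T.Adj u u') {x : V}
    (hxu : x ∉ β u) (hxu' : x ∉ β u')
    (h1 : Rch T (Finset.univ.erase u) (bag0 hcov x) u')
    (h2 : Rch T (Finset.univ.erase u') (bag0 hcov x) u) : False := by
  set b := bag0 hcov x with hb
  have hbu : b ≠ u := fun h => hxu (h ▸ bag0_mem hcov x)
  have hbu' : b ≠ u' := fun h => hxu' (h ▸ bag0_mem hcov x)
  obtain ⟨P, hP, hPav⟩ := path_avoid_of_rch h1 hbu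
  obtain ⟨Q, hQ, hQav⟩ := path_avoid_of_rch h2 hbu'
  -- R := Q.concat (u ~ u') is a path from b to u'
  have hR : (Q.concat hadj).IsPath := by
    rw [Walk.isPath_def, Walk.support_concat,
      List.nodup_append]
    refine ⟨hQ.support_nodup, List.nodup_singleton _, ?_⟩
    intro w hw _ hw'
    rw [List.mem_singleton] at hw'
    exact hw' ▸ hQav w hw
  have := ht.IsAcyclic.path_unique ⟨P, hP⟩ ⟨Q.concat hadj, hR⟩
  have hu : u ∈ (Q.concat hadj).support := by
    rw [Walk.support_concat, List.mem_append]
    exact Or.inl (Walk.end_mem_support Q)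
  have : u ∈ P.support := by
    have hpq : P = Q.concat hadj := congrArg Subtype.val this
    rw [hpq]; exact hu
  exact hPav u this rfl

include hcov in
/-- A heavy direction can be normalized to a neighbour. -/
lemma heavy_normalize (ht : T.IsTree) {u a : ι} (hne : a ≠ u)
    (hH : Heavy (T := T) hcov W u a) : ∃ a', T.Adj u a' ∧ Heavy (T := T) hcov W u a' := by
  obtain ⟨p⟩ := (ht.isConnected.preconnected a u)
  -- take the path, look at the last step
  have hP := p.bypass_isPath
  set P := p.bypass with hPdef
  -- P : walk a u, path; reverse it: path u a, nonnil
  have : P.reverse.IsPath := hP.reverse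
  rcases hrev : P.reverse with _ | ⟨hadj, q⟩
  · exact absurd (by rw [← Walk.length_reverse, hrev]; rfl : P.length = 0)
      (by intro h; exact hne ((Walk.eq_of_length_eq_zero h)))
  · rename_i a' -- q : T.Walk a' a, hadj : T.Adj u a'
    have hq : q.IsPath ∧ u ∉ q.support := by
      have := this; rw [hrev, Walk.cons_isPath_iff] at this; exact this
    have hrch : Rch T (Finset.univ.erase u) a a' := by
      have hsupq : ∀ w ∈ q.reverse.support, w ≠ u := by
        intro w hw
        rw [Walk.support_reverse, List.mem_reverse] at hw
        exact fun hwu => hq.2 (hwu ▸ hw)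
      exact rch_of_walk_avoid q.reverse hsupq
    refine ⟨a', hadj, ?_⟩
    have hsub := Wtow_mono_target hcov (W := W) hrch
    unfold Heavy at hH ⊢
    have := Finset.card_le_card hsub
    omega

def csize (u a : ι) : ℕ :=
  (Finset.univ.filter (fun z => Rch T (Finset.univ.erase u) z a)).card

include hcov hconn hedge in
/-- The descent step. -/
lemma descent_step (ht : T.IsTree) {u a : ι} (hadj : T.Adj u a)
    (hH : Heavy (T := T) hcov W u a) {a'' : ι} (hadj' : T.Adj a a'')
    (hH' : Heavy (T := T) hcov W a a'') :
    csize (T := T) a a'' < csize (T := T) u a := by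
  -- (i) not heavy towards u at a
  have hdisj : ∀ x ∈ Wtow (T := T) hcov W a u, x ∉ Wtow (T := T) hcov W u a := by
    intro x hx hx'
    rw [Wtow, Finset.mem_filter] at hx hx'
    exact claim1 hcov ht hadj hx'.2.1 hx.2.1 hx'.2.2 hx.2.2
  have hNH : ¬ Heavy (T := T) hcov W a u := by
    intro hH2
    unfold Heavy at hH hH2
    have h1 : Wtow (T := T) hcov W a u ⊆ W \ Wtow (T := T) hcov W u a := by
      intro x hx
      rw [Finset.mem_sdiff]
      exact ⟨Finset.mem_of_mem_filter _ hx, hdisj x hx⟩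
    have := Finset.card_le_card h1
    have h2 : (W \ Wtow (T := T) hcov W u a).card ≤ W.card - (Wtow (T := T) hcov W u a).card :=
      le_of_eq (Finset.card_sdiff_of_subset (Finset.filter_subset _ _))
    omega
  -- (iii) a'' does not reach u in T - a
  have hnr : ¬ Rch T (Finset.univ.erase a) a'' u := by
    intro hr
    exact hNH (by
      unfold Heavy
      have := Finset.card_le_card (Wtow_mono_target hcov (W := W) hr)
      unfold Heavy at hH'
      omega)
  -- (iv) inclusion of reach-sets
  have hincl : ∀ z, Rch T (Finset.univ.erase a) z a'' →
      Rch T (Finset.univ.erase u) z a := by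
    intro z hz
    have hza : z ≠ a := by
      rcases hz.mem_or_eq with h | h
      · exact Finset.ne_of_mem_erase h
      · exact h ▸ (fun hh => hadj'.ne hh.symm)
    obtain ⟨S, hS, hSav⟩ := path_avoid_of_rch hz hza
    by_cases hu : u ∈ S.support
    · -- then u reaches a'' avoiding a, contradiction with (iii)
      exfalso
      have : Rch T (Finset.univ.erase a) u a'' := by
        have := rch_of_walk_avoid (S.dropUntil u hu)
          (fun w hw => hSav w (Walk.support_dropUntil_subset S hu hw))
        exact this
      exact hnr this.lsymm
    · -- extend S by the edge a'' ~ a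
      have hfull : ∀ w ∈ (S.concat hadj'.symm).support, w ≠ u := by
        intro w hw
        rw [Walk.support_concat, List.mem_append] at hw
        rcases hw with hw | hw
        · exact fun hh => hu (hh ▸ hw)
        · rw [List.mem_singleton] at hw
          exact hw ▸ (fun hh => hadj.ne hh.symm)
      exact rch_of_walk_avoid (S.concat hadj'.symm) hfull
  -- strictness via a
  have hsub : (Finset.univ.filter (fun z => Rch T (Finset.univ.erase a) z a''))
      ⊂ (Finset.univ.filter (fun z => Rch T (Finset.univ.erase u) z a)) := by
    constructor
    · intro z hz
      rw [Finset.mem_filter] at hz ⊢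
      exact ⟨Finset.mem_univ _, hincl z hz.2⟩
    · intro hsup
      have ha : a ∈ Finset.univ.filter (fun z => Rch T (Finset.univ.erase u) z a) :=
        Finset.mem_filter.2 ⟨Finset.mem_univ _, Rch.refl a⟩
      have := hsup ha
      rw [Finset.mem_filter] at this
      rcases this.2.mem_or_eq with h | h
      · exact (Finset.mem_erase.1 h).1 rfl
      · exact hadj'.ne h
  exact Finset.card_lt_card hsub

variable (ht : T.IsTree)

include hcov hconn hedge ht in
/-- The weighted separator theorem. -/
theorem sep_exists (A W : Finset V) :
    ∃ u : ι, ∀ v : V,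
      2 * ((W ∩ cmp G (A \ A.filter (fun x => x ∈ β u)) v).card) ≤ W.card := by
  by_contra hcon
  push_neg at hcon
  -- every node has a heavy neighbour direction
  have hno : ∀ u : ι, ∃ a, T.Adj u a ∧ Heavy (T := T) hcov W u a := by
    intro u
    obtain ⟨v, hv⟩ := hcon u
    set Z := A.filter (fun x => x ∈ β u) with hZ
    have hne : (W ∩ cmp G (A \ Z) v).Nonempty := by
      rw [← Finset.card_pos]; omega
    obtain ⟨x₀, hx₀⟩ := hne
    rw [Finset.mem_inter, mem_cmp] at hx₀
    have hnotbag : ∀ y ∈ A \ Z, y ∉ β u := by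
      intro y hy
      rw [Finset.mem_sdiff, hZ, Finset.mem_filter] at hy
      exact fun hc => hy.2 ⟨hy.1, hc⟩
    have hsub : W ∩ cmp G (A \ Z) v ⊆ Wtow (T := T) hcov W u (bag0 hcov x₀) := by
      intro y hy
      rw [Finset.mem_inter, mem_cmp] at hy
      rw [Wtow, Finset.mem_filter]
      refine ⟨hy.1, hnotbag y hy.2.1, ?_⟩
      have hrxy : Rch G (A \ Z) x₀ y := (hx₀.2.2).lsymm.ltrans hy.2.2
      exact (walk_bags_rch hcov hconn hedge u hnotbag hrxy.lsymm hy.2.1)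
    have hHb : Heavy (T := T) hcov W u (bag0 hcov x₀) := by
      unfold Heavy
      have := Finset.card_le_card hsub
      omega
    have hbne : bag0 hcov x₀ ≠ u := by
      intro h
      have := bag0_mem hcov x₀
      rw [h] at this
      exact hnotbag x₀ hx₀.2.1 this
    exact heavy_normalize hcov ht hbne hHb
  -- infinite descent on csize
  have hdesc : ∀ n : ℕ, ∀ u a : ι, T.Adj u a → Heavy (T := T) hcov W u a →
      csize (T := T) u a ≤ n → False := by
    intro n
    induction n with
    | zero =>
      intro u a hadj hH hc
      obtain ⟨a'', hadj', hH'⟩ := hno a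
      have := descent_step hcov hconn hedge ht hadj hH hadj' hH'
      omega
    | succ n ih =>
      intro u a hadj hH hc
      obtain ⟨a'', hadj', hH'⟩ := hno a
      have := descent_step hcov hconn hedge ht hadj hH hadj' hH'
      exact ih a a'' hadj' hH' (by omega)
  have : Nonempty ι := ht.isConnected.nonempty
  obtain ⟨u₀⟩ := this
  obtain ⟨a₀, hadj₀, hH₀⟩ := hno u₀
  exact hdesc (csize (T := T) u₀ a₀) u₀ a₀ hadj₀ hH₀ le_rfl

include hcov hconn hedge ht in
/-- Weighted separator with cardinality bound, from a width-`k` tree decomposition. -/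
lemma sep_card {k : ℕ} (hwid : ∀ u : ι, (β u).ncard ≤ k + 1) :
    ∀ A W : Finset V, ∃ Z, Z ⊆ A ∧ Z.card ≤ k + 1 ∧
      ∀ v, 2 * ((W ∩ cmp G (A \ Z) v).card) ≤ W.card := by
  intro A W
  obtain ⟨u, hu⟩ := sep_exists hcov hconn hedge ht A W
  refine ⟨A.filter (fun x => x ∈ β u), Finset.filter_subset _ _, ?_, hu⟩
  have h1 : A.filter (fun x => x ∈ β u) ⊆ (β u).toFinset := by
    intro x hx
    rw [Set.mem_toFinset]
    exact (Finset.mem_filter.1 hx).2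
  calc (A.filter (fun x => x ∈ β u)).card ≤ (β u).toFinset.card := Finset.card_le_card h1
    _ = (β u).ncard := (Set.ncard_eq_toFinset_card' _).symm
    _ ≤ k + 1 := hwid u


end TD
end TDwrap

section SepIter

variable {k : ℕ}

/-- Iterated separator: split into pieces of weight `≤ |W|/2^r`. -/
lemma sepr
    (hsep : ∀ A W : Finset V, ∃ Z, Z ⊆ A ∧ Z.card ≤ k + 1 ∧
      ∀ v, 2 * ((W ∩ cmp G (A \ Z) v).card) ≤ W.card) :
    ∀ r : ℕ, ∀ A W : Finset V, ∃ Z, Z ⊆ A ∧ Z.card ≤ (k+1) * 4^(r+1) ∧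
      ∀ v, 2^r * ((W ∩ cmp G (A \ Z) v).card) ≤ W.card := by
  intro r
  induction r with
  | zero =>
    intro A W
    refine ⟨∅, Finset.empty_subset _, by simp, ?_⟩
    intro v
    simpa using Finset.card_le_card (Finset.inter_subset_left
      (s₁ := W) (s₂ := cmp G (A \ ∅) v))
  | succ r ih =>
    intro A W
    obtain ⟨Z, hZA, hZc, hZw⟩ := ih A W
    set X := A \ Z with hX
    set Comps := X.image (fun v => cmp G X v) with hComps
    have hcompmem : ∀ v ∈ X, cmp G X v ∈ Comps := by
      intro v hv; exact Finset.mem_image_of_mem _ hv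
    set zk : Finset V → Finset V := fun K => Classical.choose (hsep K (W ∩ K)) with hzk
    have zk_spec : ∀ K, zk K ⊆ K ∧ (zk K).card ≤ k + 1 ∧
        ∀ v, 2 * (((W ∩ K) ∩ cmp G (K \ zk K) v).card) ≤ (W ∩ K).card :=
      fun K => Classical.choose_spec (hsep K (W ∩ K))
    set hvy : Finset V → Prop := fun K => 2^(r+1) * (W ∩ K).card > W.card with hhvy
    set HC := Comps.filter hvy with hHC
    refine ⟨Z ∪ HC.biUnion zk, ?_, ?_, ?_⟩
    · -- subset of A
      intro x hx
      rcases Finset.mem_union.1 hx with hx | hx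
      · exact hZA hx
      · obtain ⟨K, hK, hxK⟩ := Finset.mem_biUnion.1 hx
        rw [hHC, Finset.mem_filter] at hK
        obtain ⟨v, hv, rfl⟩ := Finset.mem_image.1 hK.1
        exact (Finset.sdiff_subset) (cmp_subset ((zk_spec _).1 hxK))
    · -- cardinality
      have hdisj : ∀ K₁ ∈ HC, ∀ K₂ ∈ HC, K₁ ≠ K₂ → Disjoint (W ∩ K₁) (W ∩ K₂) := by
        intro K₁ hK₁ K₂ hK₂ hne
        rw [hHC, Finset.mem_filter] at hK₁ hK₂
        obtain ⟨v₁, _, rfl⟩ := Finset.mem_image.1 hK₁.1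
        obtain ⟨v₂, _, rfl⟩ := Finset.mem_image.1 hK₂.1
        exact Finset.disjoint_of_subset_left Finset.inter_subset_right
          (Finset.disjoint_of_subset_right Finset.inter_subset_right
            (cmp_disjoint hne))
      have hHCcard : HC.card ≤ 2^(r+1) := by
        by_contra hgt
        push_neg at hgt
        have hsum : ∑ K ∈ HC, (W ∩ K).card ≤ W.card := by
          rw [← Finset.card_biUnion hdisj]
          apply Finset.card_le_card
          intro x hx
          obtain ⟨K, _, hxK⟩ := Finset.mem_biUnion.1 hx
          exact (Finset.mem_inter.1 hxK).1
        have hlow : ∀ K ∈ HC, W.card + 1 ≤ 2^(r+1) * (W ∩ K).card := by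
          intro K hK
          rw [hHC, Finset.mem_filter] at hK
          omega
        have h2 : HC.card * (W.card + 1) ≤ 2^(r+1) * W.card := by
          calc HC.card * (W.card + 1) = ∑ _K ∈ HC, (W.card + 1) := by
                rw [Finset.sum_const, smul_eq_mul]
              _ ≤ ∑ K ∈ HC, 2^(r+1) * (W ∩ K).card := Finset.sum_le_sum hlow
              _ = 2^(r+1) * ∑ K ∈ HC, (W ∩ K).card := by rw [Finset.mul_sum]
              _ ≤ 2^(r+1) * W.card := Nat.mul_le_mul_left _ hsum
        have h3 : 2^(r+1) * (W.card + 1) ≤ HC.card * (W.card + 1) :=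
          Nat.mul_le_mul_right _ (by omega)
        have h4 : 2^(r+1) * (W.card + 1) = 2^(r+1) * W.card + 2^(r+1) := by ring
        have hpow : 0 < 2^(r+1) := Nat.pow_pos (by norm_num)
        omega
      calc (Z ∪ HC.biUnion zk).card ≤ Z.card + (HC.biUnion zk).card :=
            Finset.card_union_le _ _
        _ ≤ (k+1) * 4^(r+1) + ∑ K ∈ HC, (zk K).card :=
            Nat.add_le_add hZc Finset.card_biUnion_le
        _ ≤ (k+1) * 4^(r+1) + ∑ _K ∈ HC, (k+1) :=
            Nat.add_le_add_left (Finset.sum_le_sum (fun K _ => (zk_spec K).2.1)) _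
        _ = (k+1) * 4^(r+1) + HC.card * (k+1) := by rw [Finset.sum_const, smul_eq_mul]
        _ ≤ (k+1) * 4^(r+1) + 2^(r+1) * (k+1) :=
            Nat.add_le_add_left (Nat.mul_le_mul_right _ hHCcard) _
        _ ≤ (k+1) * 4^(r+2) := by
            have h1 : 2^(r+1) ≤ 4^(r+1) := Nat.pow_le_pow_left (by norm_num) _
            have h2 : 4^(r+1) + 4^(r+1) ≤ 4^(r+2) := by
              have : 4^(r+2) = 4^(r+1) * 4 := by ring
              omega
            calc (k+1) * 4^(r+1) + 2^(r+1) * (k+1)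
                ≤ (k+1) * 4^(r+1) + 4^(r+1) * (k+1) :=
                  Nat.add_le_add_left (Nat.mul_le_mul_right _ h1) _
              _ = (k+1) * (4^(r+1) + 4^(r+1)) := by ring
              _ ≤ (k+1) * 4^(r+2) := Nat.mul_le_mul_left _ h2
    · -- the weight bound
      intro v
      set Z' := Z ∪ HC.biUnion zk with hZ'
      by_cases hv : v ∈ A \ Z'
      · have hvX : v ∈ X := by
          rw [hX, Finset.mem_sdiff]
          rw [Finset.mem_sdiff, hZ'] at hv
          exact ⟨hv.1, fun hc => hv.2 (Finset.mem_union_left _ hc)⟩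
        set K := cmp G X v with hK
        have hKmem : K ∈ Comps := hcompmem v hvX
        have hsubX : A \ Z' ⊆ X := by
          intro x hx
          rw [Finset.mem_sdiff] at hx
          rw [hX, Finset.mem_sdiff]
          exact ⟨hx.1, fun hc => hx.2 (Finset.mem_union_left _ hc)⟩
        by_cases hheavy : hvy K
        · -- transfer into cmp G (K \ zk K) v
          have hKHC : K ∈ HC := by rw [hHC, Finset.mem_filter]; exact ⟨hKmem, hheavy⟩
          have htrans : ∀ w, Rch G (A \ Z') v w → w ∈ A \ Z' → w ∈ K \ zk K := by
            intro w hrw hwmem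
            rw [Finset.mem_sdiff]
            constructor
            · rw [hK, mem_cmp]
              exact ⟨hsubX hwmem, (hrw.mono hsubX : Rch G X v w)⟩
            · intro hc
              rw [Finset.mem_sdiff, hZ'] at hwmem
              exact hwmem.2 (Finset.mem_union_right _ (Finset.mem_biUnion.2 ⟨K, hKHC, hc⟩))
          have hsubc : W ∩ cmp G (A \ Z') v ⊆ (W ∩ K) ∩ cmp G (K \ zk K) v := by
            intro w hw
            rw [Finset.mem_inter, mem_cmp] at hw
            have hwK : w ∈ K \ zk K := htrans w hw.2.2 hw.2.1
            rw [Finset.mem_inter, Finset.mem_inter, mem_cmp (X := K \ zk K)]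
            exact ⟨⟨hw.1, (Finset.mem_sdiff.1 hwK).1⟩, hwK,
              (hw.2.2).transfer htrans⟩
          have h1 := Finset.card_le_card hsubc
          have h2 := (zk_spec K).2.2 v
          have h3 : 2^r * (W ∩ K).card ≤ W.card := by
            rw [hK]; exact hZw v
          calc 2^(r+1) * (W ∩ cmp G (A \ Z') v).card
              = 2^r * (2 * (W ∩ cmp G (A \ Z') v).card) := by ring
            _ ≤ 2^r * (2 * ((W ∩ K) ∩ cmp G (K \ zk K) v).card) := by
                apply Nat.mul_le_mul_left; omega
            _ ≤ 2^r * (W ∩ K).card := Nat.mul_le_mul_left _ h2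
            _ ≤ W.card := h3
        · -- K not heavy
          have hsubc : W ∩ cmp G (A \ Z') v ⊆ W ∩ K := by
            intro w hw
            rw [Finset.mem_inter, mem_cmp] at hw
            rw [Finset.mem_inter, hK, mem_cmp]
            exact ⟨hw.1, hsubX hw.2.1, hw.2.2.mono hsubX⟩
          have h1 := Finset.card_le_card hsubc
          rw [hhvy] at hheavy
          push_neg at hheavy
          calc 2^(r+1) * (W ∩ cmp G (A \ Z') v).card
              ≤ 2^(r+1) * (W ∩ K).card := Nat.mul_le_mul_left _ h1
            _ ≤ W.card := by omega
      · rw [cmp_eq_empty_of_not_mem hv]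
        simp

end SepIter

section Level

variable {Δ k : ℕ}

/-- interface size bound -/
def s0 (k Δ : ℕ) : ℕ := 2 * (Δ * ((k+1) * 4^(Δ+2) + 1))
/-- bag size bound -/
def wd (k Δ : ℕ) : ℕ := s0 k Δ + (k+1) * 4^(Δ+2) + 1

lemma cmp_mono {X Y : Finset V} (h : X ⊆ Y) {v : V} : cmp G X v ⊆ cmp G Y v := by
  intro x hx
  rw [mem_cmp] at hx ⊢
  exact ⟨h hx.1, hx.2.mono h⟩

lemma nbF_union_subset {B₁ B₂ X : Finset V} :
    nbF G (B₁ ∪ B₂) X ⊆ nbF G B₁ X ∪ nbF G B₂ X := by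
  intro x hx
  rw [nbF, Finset.mem_filter] at hx
  obtain ⟨hxX, b, hb, hadj⟩ := hx
  rcases Finset.mem_union.1 hb with hb | hb
  · exact Finset.mem_union_left _ (Finset.mem_filter.2 ⟨hxX, b, hb, hadj⟩)
  · exact Finset.mem_union_right _ (Finset.mem_filter.2 ⟨hxX, b, hb, hadj⟩)

variable (hdeg : ∀ v : V, (nf G v).card ≤ Δ) (hΔ : 0 < Δ)
variable (hsep : ∀ A W : Finset V, ∃ Z, Z ⊆ A ∧ Z.card ≤ k + 1 ∧
      ∀ v, 2 * ((W ∩ cmp G (A \ Z) v).card) ≤ W.card)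

include hdeg hΔ hsep in
/-- The bag construction: a small `B ⊇ S` so that every component of `A - B`
has a small attachment. -/
lemma bag_ex (A S : Finset V) (hSA : S ⊆ A) (hS : S.card ≤ s0 k Δ)
    (hA : A.Nonempty) :
    ∃ B : Finset V, S ⊆ B ∧ B ⊆ A ∧ B.Nonempty ∧ B.card ≤ wd k Δ ∧
      ∀ v, (nbF G B (A \ B) ∩ cmp G (A \ B) v).card ≤ s0 k Δ := by
  set W := nbF G S (A \ S) with hW
  have hWcard : W.card ≤ Δ * s0 k Δ :=
    le_trans (nbF_card_le hdeg S (A \ S)) (Nat.mul_le_mul_left _ hS)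
  obtain ⟨Z, hZA, hZc0, hZw0⟩ := sepr hsep (Δ+1) (A \ S) W
  have hZc : Z.card ≤ (k+1) * 4^(Δ+2) := hZc0
  have hZw : ∀ v, 2^(Δ+1) * ((W ∩ cmp G ((A \ S) \ Z) v).card) ≤ W.card := hZw0
  obtain ⟨a₀, ha₀⟩ := hA
  set B := S ∪ Z ∪ {a₀} with hB
  have hBA : B ⊆ A := by
    intro x hx
    rcases Finset.mem_union.1 hx with hx | hx
    · rcases Finset.mem_union.1 hx with hx | hx
      · exact hSA hx
      · exact Finset.mem_sdiff.1 (hZA hx) |>.1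
    · rw [Finset.mem_singleton] at hx; exact hx ▸ ha₀
  refine ⟨B, ?_, hBA, ⟨a₀, by simp [hB]⟩, ?_, ?_⟩
  · intro x hx; exact Finset.mem_union_left _ (Finset.mem_union_left _ hx)
  · calc B.card ≤ (S ∪ Z).card + ({a₀} : Finset V).card := Finset.card_union_le _ _
      _ ≤ S.card + Z.card + 1 := by
          have := Finset.card_union_le S Z
          simp only [Finset.card_singleton]
          omega
      _ ≤ wd k Δ := by
          rw [wd]
          omega
  · intro v
    have hground : A \ B ⊆ (A \ S) \ Z := by
      intro x hx
      rw [Finset.mem_sdiff] at hx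
      rw [Finset.mem_sdiff, Finset.mem_sdiff]
      refine ⟨⟨hx.1, fun hc => hx.2 (Finset.mem_union_left _ (Finset.mem_union_left _ hc))⟩,
        fun hc => hx.2 (Finset.mem_union_left _ (Finset.mem_union_right _ hc))⟩
    have hsplit : nbF G B (A \ B) ⊆ nbF G (S ∪ Z) (A \ B) ∪ nbF G {a₀} (A \ B) :=
      nbF_union_subset
    have hsplit2 : nbF G (S ∪ Z) (A \ B) ⊆ nbF G S (A \ B) ∪ nbF G Z (A \ B) :=
      nbF_union_subset
    -- first piece
    have hpc1 : nbF G S (A \ B) ∩ cmp G (A \ B) v ⊆ W ∩ cmp G ((A \ S) \ Z) v := by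
      intro x hx
      rw [Finset.mem_inter] at hx ⊢
      have hground2 : A \ B ⊆ A \ S := by
        intro y hy
        rw [Finset.mem_sdiff] at hy ⊢
        exact ⟨hy.1, fun hc => hy.2 (Finset.mem_union_left _ (Finset.mem_union_left _ hc))⟩
      exact ⟨nbF_mono hground2 hx.1, cmp_mono hground hx.2⟩
    set c₁ := (W ∩ cmp G ((A \ S) \ Z) v).card with hc₁
    have h2d : 2 * Δ ≤ 2^(Δ+1) := by
      have := Nat.lt_two_pow_self (n := Δ)
      rw [pow_succ]
      omega
    have hc1b : 2 * c₁ ≤ s0 k Δ := by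
      have hx1 : 2^(Δ+1) * c₁ ≤ W.card := hZw v
      have hx2 : 2 * Δ * c₁ ≤ 2^(Δ+1) * c₁ := Nat.mul_le_mul_right _ h2d
      have hx3 : Δ * (2 * c₁) ≤ Δ * s0 k Δ := by
        calc Δ * (2 * c₁) = 2 * Δ * c₁ := by ring
          _ ≤ W.card := le_trans hx2 hx1
          _ ≤ Δ * s0 k Δ := hWcard
      exact Nat.le_of_mul_le_mul_left hx3 hΔ
    -- second and third pieces
    have hpc2 : (nbF G Z (A \ B)).card ≤ Δ * ((k+1) * 4^(Δ+2)) :=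
      le_trans (nbF_card_le hdeg Z (A \ B)) (Nat.mul_le_mul_left _ hZc)
    have hpc3 : (nbF G {a₀} (A \ B)).card ≤ Δ * 1 := by
      have := nbF_card_le hdeg ({a₀} : Finset V) (A \ B)
      simpa using this
    have hfin : nbF G B (A \ B) ∩ cmp G (A \ B) v ⊆
        (nbF G S (A \ B) ∩ cmp G (A \ B) v) ∪ nbF G Z (A \ B) ∪ nbF G {a₀} (A \ B) := by
      intro x hx
      rw [Finset.mem_inter] at hx
      rcases Finset.mem_union.1 (hsplit hx.1) with h | h
      · rcases Finset.mem_union.1 (hsplit2 h) with h' | h'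
        · exact Finset.mem_union_left _ (Finset.mem_union_left _
            (Finset.mem_inter.2 ⟨h', hx.2⟩))
        · exact Finset.mem_union_left _ (Finset.mem_union_right _ h')
      · exact Finset.mem_union_right _ h
    have hcard1 := Finset.card_le_card hpc1
    have hcard : (nbF G B (A \ B) ∩ cmp G (A \ B) v).card ≤
        c₁ + Δ * ((k+1) * 4^(Δ+2)) + Δ * 1 := by
      calc (nbF G B (A \ B) ∩ cmp G (A \ B) v).card
          ≤ ((nbF G S (A \ B) ∩ cmp G (A \ B) v) ∪ nbF G Z (A \ B) ∪
              nbF G {a₀} (A \ B)).card := Finset.card_le_card hfin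
        _ ≤ ((nbF G S (A \ B) ∩ cmp G (A \ B) v) ∪ nbF G Z (A \ B)).card +
              (nbF G {a₀} (A \ B)).card := Finset.card_union_le _ _
        _ ≤ (nbF G S (A \ B) ∩ cmp G (A \ B) v).card + (nbF G Z (A \ B)).card +
              (nbF G {a₀} (A \ B)).card := by
            have := Finset.card_union_le (nbF G S (A \ B) ∩ cmp G (A \ B) v)
              (nbF G Z (A \ B))
            omega
        _ ≤ c₁ + Δ * ((k+1) * 4^(Δ+2)) + Δ * 1 := by
            have := hcard1; have := hpc2; have := hpc3; omega
    have hs0 : s0 k Δ = 2 * (Δ * ((k+1) * 4^(Δ+2)) + Δ * 1) := by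
      rw [s0]; ring
    omega

include hdeg hΔ hsep in
/-- The leveling function. -/
lemma level_ex : ∀ (n : ℕ) (A S : Finset V), A.card ≤ n → S ⊆ A → S.card ≤ s0 k Δ →
    ∃ lev : V → ℕ,
      (∀ v ∈ S, lev v = 0) ∧
      (∀ u v, u ∈ A → v ∈ A → G.Adj u v → lev u ≤ lev v + 1) ∧
      (∀ a v, ((A.filter (fun x => lev x = a)).filter
          (fun x => Rch G (A.filter (fun y => a ≤ lev y)) v x)).card ≤ wd k Δ) := by
  intro n
  induction n with
  | zero =>
    intro A S hA hSA _
    have hAe : A = ∅ := Finset.card_eq_zero.1 (Nat.le_zero.1 hA)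
    subst hAe
    refine ⟨fun _ => 0, fun v hv => absurd (hSA hv) (by simp), ?_, ?_⟩
    · intro u v hu; simp at hu
    · intro a v; simp
  | succ n ih =>
    intro A S hA hSA hScard
    rcases A.eq_empty_or_nonempty with hAe | hAne
    · subst hAe
      refine ⟨fun _ => 0, fun v hv => absurd (hSA hv) (by simp), ?_, ?_⟩
      · intro u v hu; simp at hu
      · intro a v; simp
    obtain ⟨B, hSB, hBA, hBne, hBcard, hBcomp⟩ := bag_ex hdeg hΔ hsep A S hSA hScard hAne
    -- the recursive level functions per component
    set Props : Finset V → (V → ℕ) → Prop := fun K lev =>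
      (∀ v ∈ nbF G B (A \ B) ∩ K, lev v = 0) ∧
      (∀ u v, u ∈ K → v ∈ K → G.Adj u v → lev u ≤ lev v + 1) ∧
      (∀ a v, ((K.filter (fun x => lev x = a)).filter
          (fun x => Rch G (K.filter (fun y => a ≤ lev y)) v x)).card ≤ wd k Δ)
      with hProps
    set F : Finset V → (V → ℕ) := fun K =>
      if h : ∃ lev, Props K lev then Classical.choose h else fun _ => 0 with hF
    have hsmall : A \ B ⊂ A := by
      obtain ⟨b₀, hb₀⟩ := hBne
      refine Finset.ssubset_iff_of_subset (Finset.sdiff_subset) |>.2 ?_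
      exact ⟨b₀, hBA hb₀, fun hc => (Finset.mem_sdiff.1 hc).2 hb₀⟩
    have hFspec : ∀ x ∈ A \ B, Props (cmp G (A \ B) x) (F (cmp G (A \ B) x)) := by
      intro x hx
      have hKcard : (cmp G (A \ B) x).card ≤ n := by
        have h1 : (cmp G (A \ B) x).card ≤ (A \ B).card :=
          Finset.card_le_card cmp_subset
        have h2 : (A \ B).card < A.card := Finset.card_lt_card hsmall
        omega
      have hex : ∃ lev, Props (cmp G (A \ B) x) lev := by
        obtain ⟨lev, h1, h2, h3⟩ := ih (cmp G (A \ B) x)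
          (nbF G B (A \ B) ∩ cmp G (A \ B) x) hKcard
          Finset.inter_subset_right (hBcomp x)
        exact ⟨lev, h1, h2, h3⟩
      simp only [hF]
      rw [dif_pos hex]
      exact Classical.choose_spec hex
    set lev : V → ℕ := fun x => if x ∈ B then 0 else F (cmp G (A \ B) x) x + 1 with hlev
    have hlevB : ∀ x ∈ B, lev x = 0 := by
      intro x hx; rw [hlev]; simp [hx]
    have hlevNB : ∀ x, x ∉ B → lev x = F (cmp G (A \ B) x) x + 1 := by
      intro x hx; rw [hlev]; simp [hx]
    refine ⟨lev, fun v hv => hlevB v (hSB hv), ?_, ?_⟩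
    · -- L2
      intro u v hu hv hadj
      by_cases hub : u ∈ B
      · rw [hlevB u hub]; omega
      by_cases hvb : v ∈ B
      · -- u ∉ B, v ∈ B : u is in the attachment of its component
        have huAB : u ∈ A \ B := Finset.mem_sdiff.2 ⟨hu, hub⟩
        have hunb : u ∈ nbF G B (A \ B) ∩ cmp G (A \ B) u := by
          rw [Finset.mem_inter]
          refine ⟨Finset.mem_filter.2 ⟨huAB, v, hvb, hadj.symm⟩, mem_cmp_self huAB⟩
        have := (hFspec u huAB).1 u hunb
        rw [hlevNB u hub, this, hlevB v hvb]
      · -- both outside B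
        have huAB : u ∈ A \ B := Finset.mem_sdiff.2 ⟨hu, hub⟩
        have hvAB : v ∈ A \ B := Finset.mem_sdiff.2 ⟨hv, hvb⟩
        have hradj : Rch G (A \ B) u v := ((pG G (A \ B)).adj_symm
          ⟨hadj.symm, hvAB, huAB⟩).reachable
        have hKuv : cmp G (A \ B) u = cmp G (A \ B) v := cmp_eq_of_rch hradj
        have hu' : u ∈ cmp G (A \ B) u := mem_cmp_self huAB
        have hv' : v ∈ cmp G (A \ B) u := by rw [hKuv]; exact mem_cmp_self hvAB
        have := (hFspec u huAB).2.1 u v hu' hv' hadj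
        rw [hlevNB u hub, hlevNB v hvb, ← hKuv]
        omega
    · -- L3
      intro a v
      match a with
      | 0 =>
        have hsub : ((A.filter (fun x => lev x = 0)).filter
            (fun x => Rch G (A.filter (fun y => 0 ≤ lev y)) v x)) ⊆ B := by
          intro x hx
          rw [Finset.mem_filter, Finset.mem_filter] at hx
          by_contra hxb
          rw [hlevNB x hxb] at hx
          omega
        calc _ ≤ B.card := Finset.card_le_card hsub
          _ ≤ wd k Δ := hBcard
      | (a' + 1) =>
        set SL := A.filter (fun y => a' + 1 ≤ lev y) with hSL
        have hSLAB : SL ⊆ A \ B := by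
          intro x hx
          rw [hSL, Finset.mem_filter] at hx
          refine Finset.mem_sdiff.2 ⟨hx.1, fun hc => ?_⟩
          rw [hlevB x hc] at hx
          omega
        by_cases hvSL : v ∈ SL
        · have hvAB : v ∈ A \ B := hSLAB hvSL
          set K := cmp G (A \ B) v with hK
          have hPropsv := hFspec v hvAB
          -- show our set is contained in the IH set
          have hsub : ((A.filter (fun x => lev x = a' + 1)).filter
              (fun x => Rch G SL v x)) ⊆
              ((K.filter (fun x => F K x = a')).filter
                (fun x => Rch G (K.filter (fun y => a' ≤ F K y)) v x)) := by
            intro x hx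
            rw [Finset.mem_filter, Finset.mem_filter] at hx
            obtain ⟨⟨hxA, hxlev⟩, hxr⟩ := hx
            have hxb : x ∉ B := by
              intro hc; rw [hlevB x hc] at hxlev; omega
            have hxAB : x ∈ A \ B := Finset.mem_sdiff.2 ⟨hxA, hxb⟩
            have hxK : x ∈ K := by
              rw [hK, mem_cmp]
              exact ⟨hxAB, hxr.mono hSLAB⟩
            have hKx : cmp G (A \ B) x = K := by
              rw [hK]
              exact (cmp_eq_of_rch (hxr.mono hSLAB)).symm
            have hFx : F K x = a' := by
              have := hlevNB x hxb
              rw [hKx] at this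
              omega
            have hcl : ∀ w, Rch G SL v w → w ∈ SL → w ∈ K.filter (fun y => a' ≤ F K y) := by
              intro w hrw hwSL
              have hwAB : w ∈ A \ B := hSLAB hwSL
              have hwK : w ∈ K := by
                rw [hK, mem_cmp]; exact ⟨hwAB, hrw.mono hSLAB⟩
              have hKw : cmp G (A \ B) w = K := by
                rw [hK]; exact (cmp_eq_of_rch (hrw.mono hSLAB)).symm
              have hwb : w ∉ B := (Finset.mem_sdiff.1 hwAB).2
              have hwlev : a' + 1 ≤ lev w := (Finset.mem_filter.1 hwSL).2
              have := hlevNB w hwb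
              rw [hKw] at this
              refine Finset.mem_filter.2 ⟨hwK, by omega⟩
            exact Finset.mem_filter.2 ⟨Finset.mem_filter.2 ⟨hxK, hFx⟩, hxr.transfer hcl⟩
          calc _ ≤ _ := Finset.card_le_card hsub
            _ ≤ wd k Δ := hPropsv.2.2 a' v
        · -- v not in the filtered graph: the set is a subset of {v}
          have hsub : ((A.filter (fun x => lev x = a' + 1)).filter
              (fun x => Rch G SL v x)) ⊆ {v} := by
            intro x hx
            rw [Finset.mem_filter] at hx
            rcases hx.2.mem_or_eq with h | h
            · exact absurd h hvSL
            · rw [Finset.mem_singleton, h]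
          calc _ ≤ ({v} : Finset V).card := Finset.card_le_card hsub
            _ ≤ wd k Δ := by rw [Finset.card_singleton, wd]; omega

end Level

section Band

variable {Δ w : ℕ}

/-- closure induction for reachability -/
lemma rch_closed {X : Finset V} {P : V → Prop} {v : V} (hbase : P v)
    (hstep : ∀ x y, P x → (pG G X).Adj x y → P y) :
    ∀ x, Rch G X v x → P x := by
  have key : ∀ (u x : V) (p : (pG G X).Walk u x), P u → P x := by
    intro u x p
    induction p with
    | nil => exact id
    | cons h q ih => exact fun hu => ih (hstep _ _ hu h)
  intro x hx
  obtain ⟨p⟩ := hx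
  exact key v x p hbase

/-- band size bound -/
def hgt (Δ w : ℕ) : ℕ → ℕ
  | 0 => 1
  | (m+1) => w + (Δ * w + 1) * hgt Δ w m

lemma hgt_zero : hgt Δ w 0 = 1 := rfl

lemma hgt_succ (m : ℕ) : hgt Δ w (m+1) = w + (Δ * w + 1) * hgt Δ w m := rfl

lemma hgt_pos (hw : 1 ≤ w) : ∀ m, 1 ≤ hgt Δ w m
  | 0 => le_refl 1
  | (m+1) => by rw [hgt_succ]; omega

variable (hdeg : ∀ v : V, (nf G v).card ≤ Δ) (hw : 1 ≤ w)
variable {lev : V → ℕ}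
variable (hL2 : ∀ u v : V, G.Adj u v → lev u ≤ lev v + 1)
variable (hL3 : ∀ (a : ℕ) (v : V),
    ((Finset.univ.filter (fun x => lev x = a)).filter
      (fun x => Rch G (Finset.univ.filter (fun y => a ≤ lev y)) v x)).card ≤ w)

include hdeg hw hL2 hL3 in
lemma band_bound : ∀ (m a : ℕ) (v : V),
    ((Finset.univ.filter (fun x => a ≤ lev x ∧ lev x < a + m)).filter
      (fun x => Rch G (Finset.univ.filter (fun y => a ≤ lev y ∧ lev y < a + m)) v x)).card
      ≤ hgt Δ w m := by
  intro m
  induction m with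
  | zero =>
    intro a v
    have : (Finset.univ.filter (fun x => a ≤ lev x ∧ lev x < a + 0)) = ∅ := by
      ext x
      simp only [Finset.mem_filter, Finset.mem_univ, true_and, Finset.notMem_empty,
        iff_false]
      omega
    rw [this]
    simp [hgt_zero]
  | succ m ih =>
    intro a v
    set Bnd := Finset.univ.filter (fun x => a ≤ lev x ∧ lev x < a + (m+1)) with hBnd
    by_cases hv : v ∈ Bnd
    · set SlFull := (Finset.univ.filter (fun x => lev x = a)).filter
        (fun x => Rch G (Finset.univ.filter (fun y => a ≤ lev y)) v x) with hSlFull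
      have hSlcard : SlFull.card ≤ w := hL3 a v
      set E := Bnd.filter (fun y => a+1 ≤ lev y ∧ (y = v ∨ ∃ z ∈ SlFull, G.Adj z y))
        with hE
      have hEcard : E.card ≤ Δ * w + 1 := by
        have hEsub : E ⊆ {v} ∪ SlFull.biUnion (fun z => nf G z) := by
          intro y hy
          rw [hE, Finset.mem_filter] at hy
          rcases hy.2.2 with h | ⟨z, hz, hadj⟩
          · exact Finset.mem_union_left _ (by simp [h])
          · exact Finset.mem_union_right _
              (Finset.mem_biUnion.2 ⟨z, hz, by simp [nf, hadj]⟩)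
        calc E.card ≤ ({v} ∪ SlFull.biUnion (fun z => nf G z)).card :=
              Finset.card_le_card hEsub
          _ ≤ 1 + (SlFull.biUnion (fun z => nf G z)).card := by
              have := Finset.card_union_le ({v} : Finset V) (SlFull.biUnion (fun z => nf G z))
              simpa using this
          _ ≤ 1 + ∑ z ∈ SlFull, (nf G z).card := by
              have := Finset.card_biUnion_le (s := SlFull) (t := fun z => nf G z)
              omega
          _ ≤ 1 + ∑ _z ∈ SlFull, Δ := by
              have := Finset.sum_le_sum (fun z (_ : z ∈ SlFull) => hdeg z)
              omega
          _ ≤ Δ * w + 1 := by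
              rw [Finset.sum_const, smul_eq_mul]
              have h1 : SlFull.card * Δ ≤ w * Δ := Nat.mul_le_mul_right _ hSlcard
              have h2 : w * Δ = Δ * w := Nat.mul_comm _ _
              omega
      -- the closure predicate
      set UpB := Finset.univ.filter (fun y => a+1 ≤ lev y ∧ lev y < (a+1) + m) with hUpB
      set P : V → Prop := fun x => Rch G Bnd v x ∧ x ∈ Bnd ∧
        ((lev x = a ∧ x ∈ SlFull) ∨
          (a+1 ≤ lev x ∧ ∃ y ∈ E, Rch G UpB y x)) with hP
      have hbase : P v := by
        rw [hP]
        have hvBnd := hv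
        rw [hBnd, Finset.mem_filter] at hvBnd
        refine ⟨Rch.refl v, hv, ?_⟩
        by_cases hva : lev v = a
        · exact Or.inl ⟨hva, by
            rw [hSlFull, Finset.mem_filter, Finset.mem_filter]
            exact ⟨⟨Finset.mem_univ _, hva⟩, Rch.refl v⟩⟩
        · refine Or.inr ⟨by omega, v, ?_, Rch.refl v⟩
          rw [hE, Finset.mem_filter]
          exact ⟨hv, ⟨by omega, Or.inl rfl⟩⟩
      have hstep : ∀ x y, P x → (pG G Bnd).Adj x y → P y := by
        intro x y hx hadj
        obtain ⟨hadjG, hxB, hyB⟩ := hadj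
        rw [hP] at hx
        have hyBnd := hyB
        rw [hBnd, Finset.mem_filter] at hyBnd
        have hrvy : Rch G Bnd v y := hx.1.ltrans (Adj.reachable ⟨hadjG, hxB, hyB⟩)
        rw [hP]
        refine ⟨hrvy, hyB, ?_⟩
        by_cases hya : lev y = a
        · refine Or.inl ⟨hya, ?_⟩
          rw [hSlFull, Finset.mem_filter, Finset.mem_filter]
          refine ⟨⟨Finset.mem_univ _, hya⟩, ?_⟩
          refine hrvy.transfer ?_
          intro w' hw' hw'B
          rw [hBnd, Finset.mem_filter] at hw'B
          rw [Finset.mem_filter]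
          exact ⟨Finset.mem_univ _, hw'B.2.1⟩
        · refine Or.inr ⟨by omega, ?_⟩
          rcases hx.2.2 with ⟨hxa, hxSl⟩ | ⟨hxup, y₀, hy₀E, hry₀⟩
          · -- y is an entry vertex
            refine ⟨y, ?_, Rch.refl y⟩
            rw [hE, Finset.mem_filter]
            exact ⟨hyB, by omega, Or.inr ⟨x, hxSl, hadjG⟩⟩
          · -- extend within the upper band
            have hxBnd := hxB
            rw [hBnd, Finset.mem_filter] at hxBnd
            have hxUp : x ∈ UpB := by
              rw [hUpB, Finset.mem_filter]
              exact ⟨Finset.mem_univ _, by omega, by omega⟩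
            have hyUp : y ∈ UpB := by
              rw [hUpB, Finset.mem_filter]
              exact ⟨Finset.mem_univ _, by omega, by omega⟩
            exact ⟨y₀, hy₀E, hry₀.ltrans (Adj.reachable ⟨hadjG, hxUp, hyUp⟩)⟩
      have hclosed := rch_closed (X := Bnd) (P := P) hbase hstep
      -- final counting
      have hsub : Bnd.filter (fun x => Rch G Bnd v x) ⊆
          SlFull ∪ E.biUnion (fun y => UpB.filter (fun x => Rch G UpB y x)) := by
        intro x hx
        rw [Finset.mem_filter] at hx
        have hPx := hclosed x hx.2
        rw [hP] at hPx
        rcases hPx.2.2 with ⟨_, hxSl⟩ | ⟨hxup, y₀, hy₀, hr⟩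
        · exact Finset.mem_union_left _ hxSl
        · refine Finset.mem_union_right _ (Finset.mem_biUnion.2 ⟨y₀, hy₀, ?_⟩)
          rw [Finset.mem_filter]
          have hxBnd := hPx.2.1
          rw [hBnd, Finset.mem_filter] at hxBnd
          refine ⟨?_, hr⟩
          rw [hUpB, Finset.mem_filter]
          exact ⟨Finset.mem_univ _, by omega, by omega⟩
      have hIH : ∀ y ∈ E, (UpB.filter (fun x => Rch G UpB y x)).card ≤ hgt Δ w m := by
        intro y _
        have := ih (a+1) y
        rw [← hUpB] at this
        exact this
      have hgoal : (Bnd.filter (fun x => Rch G Bnd v x)).card ≤ w + (Δ * w + 1) * hgt Δ w m := by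
        calc (Bnd.filter (fun x => Rch G Bnd v x)).card
            ≤ (SlFull ∪ E.biUnion (fun y => UpB.filter (fun x => Rch G UpB y x))).card :=
              Finset.card_le_card hsub
          _ ≤ SlFull.card + (E.biUnion (fun y => UpB.filter (fun x => Rch G UpB y x))).card :=
              Finset.card_union_le _ _
          _ ≤ SlFull.card + ∑ y ∈ E, (UpB.filter (fun x => Rch G UpB y x)).card := by
              have := Finset.card_biUnion_le (s := E)
                (t := fun y => UpB.filter (fun x => Rch G UpB y x))
              omega
          _ ≤ w + ∑ _y ∈ E, hgt Δ w m := by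
              have h1 := Finset.sum_le_sum hIH
              omega
          _ ≤ w + (Δ * w + 1) * hgt Δ w m := by
              rw [Finset.sum_const, smul_eq_mul]
              have := Nat.mul_le_mul_right (hgt Δ w m) hEcard
              omega
      rw [hgt_succ]
      exact hgoal
    · -- v outside the band
      have hsub : Bnd.filter (fun x => Rch G Bnd v x) ⊆ ∅ := by
        intro x hx
        rw [Finset.mem_filter] at hx
        rcases hx.2.mem_or_eq with h | h
        · exact absurd h hv
        · subst h; exact absurd hx.1 hv
      have h0 := Finset.card_le_card hsub
      rw [Finset.card_empty] at h0
      have h1 := hgt_pos (Δ := Δ) hw (m+1)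
      omega

end Band

section Window

variable {Δ w : ℕ}
variable (hdeg : ∀ v : V, (nf G v).card ≤ Δ) (hw : 1 ≤ w)
variable {lev : V → ℕ}
variable (hL2 : ∀ u v : V, G.Adj u v → lev u ≤ lev v + 1)
variable (hL3 : ∀ (a : ℕ) (v : V),
    ((Finset.univ.filter (fun x => lev x = a)).filter
      (fun x => Rch G (Finset.univ.filter (fun y => a ≤ lev y)) v x)).card ≤ w)

lemma hgt_mono (hw' : 1 ≤ w) : ∀ {m m' : ℕ}, m ≤ m' → hgt Δ w m ≤ hgt Δ w m' := by
  have key : ∀ m : ℕ, hgt Δ w m ≤ hgt Δ w (m+1) := by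
    intro m
    rw [hgt_succ]
    have h1 := hgt_pos (Δ := Δ) hw' m
    have h2 : 1 * hgt Δ w m ≤ (Δ * w + 1) * hgt Δ w m :=
      Nat.mul_le_mul_right _ (by omega)
    omega
  intro m m' h
  induction h with
  | refl => exact le_refl _
  | step h ih => exact le_trans ih (key _)

include hdeg hw hL2 hL3 in
/-- Core window argument: a component of the survivors around `v` fits in one window. -/
lemma window_core (m i : ℕ) (him : i < m) (v : V) (a mm : ℕ)
    (hva1 : a ≤ lev v) (hva2 : lev v < a + mm)
    (hup : (a + mm) % m = i)
    (hlo : a = 0 ∨ (a - 1) % m = i) :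
    (cmp G (Finset.univ.filter (fun x => lev x % m ≠ i)) v).card ≤ hgt Δ w mm := by
  set Srv := Finset.univ.filter (fun x => lev x % m ≠ i) with hSrv
  set Bnd := Finset.univ.filter (fun x => a ≤ lev x ∧ lev x < a + mm) with hBnd
  set P : V → Prop := fun x => Rch G Srv v x ∧ a ≤ lev x ∧ lev x < a + mm with hP
  have hstep : ∀ x y, P x → (pG G Srv).Adj x y → P y := by
    intro x y hx hadj
    obtain ⟨hadjG, hxS, hyS⟩ := hadj
    have hysrv : lev y % m ≠ i := (Finset.mem_filter.1 hyS).2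
    have h1 : lev y ≤ lev x + 1 := hL2 y x hadjG.symm
    have h2 : lev x ≤ lev y + 1 := hL2 x y hadjG
    rw [hP] at hx ⊢
    refine ⟨hx.1.ltrans (Adj.reachable ⟨hadjG, hxS, hyS⟩), ?_, ?_⟩
    · -- lower bound
      rcases hlo with h0 | hmod
      · omega
      · by_contra hcon
        push_neg at hcon
        have : lev y = a - 1 := by omega
        exact hysrv (this ▸ hmod)
    · -- upper bound
      by_contra hcon
      push_neg at hcon
      have : lev y = a + mm := by omega
      exact hysrv (this ▸ hup)
  have hclosed := rch_closed (X := Srv) (P := P) (v := v) ⟨Rch.refl v, hva1, hva2⟩ hstep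
  have hsub : cmp G Srv v ⊆ Bnd.filter (fun x => Rch G Bnd v x) := by
    intro x hx
    rw [mem_cmp] at hx
    have hPx := hclosed x hx.2
    rw [hP] at hPx
    have hxB : x ∈ Bnd := by
      rw [hBnd, Finset.mem_filter]
      exact ⟨Finset.mem_univ _, hPx.2.1, hPx.2.2⟩
    rw [Finset.mem_filter]
    refine ⟨hxB, hx.2.transfer ?_⟩
    intro w' hrw' hw'S
    have hPw' := hclosed w' hrw'
    rw [hP] at hPw'
    rw [hBnd, Finset.mem_filter]
    exact ⟨Finset.mem_univ _, hPw'.2.1, hPw'.2.2⟩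
  calc (cmp G Srv v).card ≤ (Bnd.filter (fun x => Rch G Bnd v x)).card :=
        Finset.card_le_card hsub
    _ ≤ hgt Δ w mm := band_bound hdeg hw hL2 hL3 mm a v

include hdeg hw hL2 hL3 in
/-- Deleting one residue class of levels leaves components of bounded size. -/
lemma window_bound (m i : ℕ) (him : i < m) (v : V) :
    (cmp G (Finset.univ.filter (fun x => lev x % m ≠ i)) v).card ≤ hgt Δ w (m - 1) := by
  by_cases hv : v ∈ Finset.univ.filter (fun x => lev x % m ≠ i)
  swap
  · rw [cmp_eq_empty_of_not_mem hv]
    have := hgt_pos (Δ := Δ) hw (m-1)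
    simp
  have hvsrv : lev v % m ≠ i := (Finset.mem_filter.1 hv).2
  by_cases hcase : lev v < i
  · -- window [0, i)
    have h := window_core hdeg hw hL2 hL3 m i him v 0 i
      (Nat.zero_le _) (by omega) (by simpa using Nat.mod_eq_of_lt him) (Or.inl rfl)
    exact le_trans h (hgt_mono hw (by omega))
  · -- window [c+1, c+m) where c = i + m * ((lev v - i)/m)
    push_neg at hcase
    set d := lev v - i with hd
    set t := d / m with ht
    set q := d % m with hq
    have hdm : m * t + q = d := Nat.div_add_mod d m
    have hqm : q < m := Nat.mod_lt _ (by omega)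
    set c := i + m * t with hc
    have hlevv : lev v = c + q := by omega
    have hcmod : c % m = i := by
      rw [hc, Nat.add_mul_mod_self_left, Nat.mod_eq_of_lt him]
    have hq1 : 1 ≤ q := by
      rcases Nat.eq_zero_or_pos q with h0 | h0
      · exfalso
        apply hvsrv
        rw [hlevv, h0, Nat.add_zero, hcmod]
      · exact h0
    have h := window_core hdeg hw hL2 hL3 m i him v (c+1) (m-1)
      (by omega) (by omega) ?_ (Or.inr (by simpa using hcmod))
    · exact h
    · have : c + 1 + (m - 1) = c + m := by omega
      rw [this, Nat.add_mod_right, hcmod]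

end Window


end DO

namespace DOF
open DO

/-- bridge: `maxDegLE` to `nf` cardinality. -/
lemma nf_card_of_ncard {V : Type} [Fintype V] {G : SimpleGraph V} {Δ : ℕ}
    (h : ∀ v : V, (G.neighborSet v).ncard ≤ Δ) : ∀ v, (nf G v).card ≤ Δ := by
  intro v
  have h1 : (G.neighborSet v).ncard = (nf G v).card := by
    rw [Set.ncard_eq_toFinset_card']
    congr 1
    ext x
    simp [nf, SimpleGraph.neighborSet]
    exact Set.mem_toFinset
  rw [← h1]
  exact h v

/-- The per-graph core: a leveling of `H` whose residue-class deletions leave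
small components. -/
theorem core (H : FGraph) {k Δ : ℕ} (hΔ : 0 < Δ) (htw : H.twLE k)
    (hdeg : ∀ v, (nf H.G v).card ≤ Δ) :
    ∃ lev : H.V → ℕ, ∀ (m i : ℕ), i < m →
      ∀ v : H.V, (cmp H.G (Finset.univ.filter (fun x => lev x % m ≠ i)) v).card
        ≤ hgt Δ (wd k Δ) (m-1) := by
  obtain ⟨ι, hI, T, β, htd, hwid⟩ := htw
  haveI := hI
  obtain ⟨ht, hcov, hedge', hconn⟩ := htd
  have hsep := sep_card (G := H.G) hcov hconn hedge' ht hwid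
  obtain ⟨lev, _, h2, h3⟩ := level_ex hdeg hΔ hsep (Finset.univ : Finset H.V).card
    Finset.univ ∅ le_rfl (Finset.empty_subset _) (by simp)
  have hwd1 : 1 ≤ wd k Δ := by unfold wd; omega
  refine ⟨lev, fun m i him v => ?_⟩
  exact window_bound hdeg hwd1
    (fun u v' hadj => h2 u v' (Finset.mem_univ _) (Finset.mem_univ _) hadj)
    h3 m i him v

/-- Transport reachability from the deleted graph up to the ambient punctured graph. -/
lemma rch_down {Gf : FGraph} {Z : Finset Gf.V} {u w : (Gf.del (↑Z : Set Gf.V)).V}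
    (p : (Gf.del (↑Z : Set Gf.V)).G.Walk u w) :
    Rch Gf.G (Finset.univ.filter (fun y => y ∉ Z)) u.val w.val := by
  induction p with
  | nil => exact Rch.refl _
  | @cons a b c h q ih =>
    have hadj : Gf.G.Adj a.val b.val := h
    have hpa := a.property
    have hpb := b.property
    rw [Set.mem_compl_iff, Finset.mem_coe] at hpa hpb
    have ha : a.val ∈ Finset.univ.filter (fun y => y ∉ Z) :=
      Finset.mem_filter.2 ⟨Finset.mem_univ _, hpa⟩
    have hb : b.val ∈ Finset.univ.filter (fun y => y ∉ Z) :=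
      Finset.mem_filter.2 ⟨Finset.mem_univ _, hpb⟩
    have hadj' : (pG Gf.G (Finset.univ.filter (fun y => y ∉ Z))).Adj a.val b.val :=
      ⟨hadj, ha, hb⟩
    exact hadj'.reachable.trans ih

/-- `compSize` bound from a punctured-component bound. -/
lemma compSize_le (Gf : FGraph) (Z : Finset Gf.V) (t : ℕ)
    (hcmp : ∀ v : Gf.V, (cmp Gf.G (Finset.univ.filter (fun y => y ∉ Z)) v).card ≤ t) :
    ∀ w : (Gf.del (↑Z : Set Gf.V)).V, (Gf.del (↑Z : Set Gf.V)).compSize w ≤ t := by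
  intro w
  show (((Gf.del (↑Z : Set Gf.V)).G.connectedComponentMk w).supp).ncard ≤ t
  have hsub : Subtype.val '' (((Gf.del (↑Z : Set Gf.V)).G.connectedComponentMk w).supp) ⊆
      ↑(cmp Gf.G (Finset.univ.filter (fun y => y ∉ Z)) w.val) := by
    rintro x ⟨u, hu, rfl⟩
    replace hu := (SimpleGraph.ConnectedComponent.mem_supp_iff _ u).1 hu
    have hr : (Gf.del (↑Z : Set Gf.V)).G.Reachable u w :=
      (SimpleGraph.ConnectedComponent.eq).1 hu
    obtain ⟨p⟩ := hr
    have hrch := rch_down (Gf := Gf) (Z := Z) p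
    rw [Finset.mem_coe, mem_cmp]
    have hpu : (u : Gf.V) ∈ ((↑Z : Set Gf.V)ᶜ) := u.property
    rw [Set.mem_compl_iff, Finset.mem_coe] at hpu
    exact ⟨Finset.mem_filter.2 ⟨Finset.mem_univ _, hpu⟩, hrch.lsymm⟩
  calc (((Gf.del (↑Z : Set Gf.V)).G.connectedComponentMk w).supp).ncard
      = (Subtype.val '' (((Gf.del (↑Z : Set Gf.V)).G.connectedComponentMk w).supp)).ncard :=
        (Set.ncard_image_of_injective _ Subtype.val_injective).symm
    _ ≤ (↑(cmp Gf.G (Finset.univ.filter (fun y => y ∉ Z)) w.val) : Set Gf.V).ncard :=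
        Set.ncard_le_ncard hsub (Finset.finite_toSet _)
    _ = (cmp Gf.G (Finset.univ.filter (fun y => y ∉ Z)) w.val).card :=
        Set.ncard_coe_finset _
    _ ≤ t := hcmp w.val

/-- Lift reachability from the ambient survivors to the deleted subgraph. -/
lemma rch_up {Gf : FGraph} (X : Finset Gf.V) (S' : Finset (Gf.del (↑X : Set Gf.V)).V)
    (SG : Finset Gf.V)
    (hmatch : ∀ (y : Gf.V) (hy : y ∈ ((↑X : Set Gf.V)ᶜ : Set Gf.V)),
      y ∈ SG → (⟨y, hy⟩ : (Gf.del (↑X : Set Gf.V)).V) ∈ S')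
    (havoid : ∀ y ∈ SG, y ∈ ((↑X : Set Gf.V)ᶜ : Set Gf.V)) :
    ∀ {v u : Gf.V} (p : (pG Gf.G SG).Walk v u)
      (hv : v ∈ ((↑X : Set Gf.V)ᶜ : Set Gf.V)) (hu : u ∈ ((↑X : Set Gf.V)ᶜ : Set Gf.V)),
      Rch (Gf.del (↑X : Set Gf.V)).G S' ⟨v, hv⟩ ⟨u, hu⟩ := by
  intro v u p
  induction p with
  | nil =>
    intro hv hu
    exact Rch.refl _
  | @cons a b c h q ih =>
    intro hv hu
    have hbS : b ∈ SG := h.2.2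
    have haS : a ∈ SG := h.2.1
    have hb : b ∈ ((↑X : Set Gf.V)ᶜ : Set Gf.V) := havoid b hbS
    have hadjdel : (Gf.del (↑X : Set Gf.V)).G.Adj ⟨a, hv⟩ ⟨b, hb⟩ := h.1
    have hadj : (pG (Gf.del (↑X : Set Gf.V)).G S').Adj ⟨a, hv⟩ ⟨b, hb⟩ :=
      ⟨hadjdel, hmatch a hv haS, hmatch b hb hbS⟩
    exact hadj.reachable.trans (ih hb hu)

/-- degree bound is preserved by deletion. -/
lemma nf_del (Gf : FGraph) {Δ : ℕ} (hdeg : ∀ v, (nf Gf.G v).card ≤ Δ)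
    (X : Set Gf.V) : ∀ v, (nf (Gf.del X).G v).card ≤ Δ := by
  intro v
  have hmaps : ∀ x ∈ nf (Gf.del X).G v, x.val ∈ nf Gf.G v.val := by
    intro x hx
    simp only [nf, Finset.mem_filter, Finset.mem_univ, true_and] at hx ⊢
    exact hx
  calc (nf (Gf.del X).G v).card ≤ (nf Gf.G v.val).card :=
        Finset.card_le_card_of_injOn Subtype.val hmaps
          (Subtype.val_injective.injOn)
    _ ≤ Δ := hdeg _

end DOF



/-- **Corollary 19.** Every fractionally `Tw`-fragile class with bounded maximum degree is
fractionally `Vs`-fragile. -/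
theorem stmt11 (Gc : Set FGraph) (hfrag : FGraph.FracFragile FGraph.Tw Gc)
    (hdeg : FGraph.BddMaxDeg Gc) :
    FGraph.FracFragile FGraph.Vs Gc := by
  classical
  obtain ⟨Δ₀, hdeg0⟩ := hdeg
  set Δ := Δ₀ + 1 with hΔdef
  have hΔ : 0 < Δ := Nat.succ_pos _
  have hdegnf : ∀ G ∈ Gc, ∀ v, (DO.nf G.G v).card ≤ Δ := by
    intro G hG v
    exact le_trans (DOF.nf_card_of_ncard (hdeg0 G hG) v) (Nat.le_succ _)
  intro ε hε
  have hε2 : 0 < ε/2 := by linarith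
  obtain ⟨C₀, hC₀Tw, hwit⟩ := hfrag (ε/2) hε2
  obtain ⟨k, hk⟩ := hC₀Tw
  set m : ℕ := max 1 ⌈2/ε⌉₊ with hmdef
  have hm1 : 1 ≤ m := le_max_left _ _
  have hm0 : (0:ℝ) < m := by exact_mod_cast hm1
  have hminv : (m:ℝ)⁻¹ ≤ ε/2 := by
    have h1 : (2/ε : ℝ) ≤ m := by
      have h2 : (⌈2/ε⌉₊ : ℝ) ≤ m := by exact_mod_cast le_max_right 1 ⌈2/ε⌉₊
      exact le_trans (Nat.le_ceil _) h2
    rw [div_le_iff₀ hε] at h1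
    rw [inv_le_iff_one_le_mul₀ hm0]  -- might not exist; fallback below
    nlinarith
  set t := DO.hgt Δ (DO.wd k Δ) (m-1) with htdef
  refine ⟨{H : FGraph | ∀ v : H.V, H.compSize v ≤ t}, ⟨t, fun H hH v => hH v⟩, ?_⟩
  intro G hG
  obtain ⟨π₁, hpos, hsum, hmem, hthick⟩ := hwit G hG
  have hdegG : ∀ v, (DO.nf G.G v).card ≤ Δ := hdegnf G hG
  have memU : ∀ (X : Finset G.V) (x : (G.del (↑X : Set G.V)).V),
      x ∈ (@Finset.univ ((G.del (↑X : Set G.V)).V) ((G.del (↑X : Set G.V)).fin)) :=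
    fun X x => @Finset.mem_univ _ ((G.del (↑X : Set G.V)).fin) x
  set levF : (X : Finset G.V) → (G.del (↑X : Set G.V)).V → ℕ := fun X =>
    if h : (G.del (↑X : Set G.V)).twLE k then
      Classical.choose (DOF.core (G.del (↑X : Set G.V)) hΔ h
        (DOF.nf_del G hdegG (↑X : Set G.V)))
    else fun _ => 0 with hlevF
  set DD : Finset G.V → ℕ → Finset G.V := fun X i =>
    X ∪ ((@Finset.univ ((G.del (↑X : Set G.V)).V) ((G.del (↑X : Set G.V)).fin)).filter
      (fun x => levF X x % m = i)).image Subtype.val with hDD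
  set π : Finset G.V → ℝ := fun Z =>
    (m:ℝ)⁻¹ * ∑ i ∈ Finset.range m, ∑ X : Finset G.V,
      (if DD X i = Z then π₁ X else 0) with hπ
  have hπnn : ∀ Z, 0 ≤ π Z := by
    intro Z
    simp only [hπ]
    apply mul_nonneg (inv_nonneg.2 (le_of_lt hm0))
    apply Finset.sum_nonneg
    intro i _
    apply Finset.sum_nonneg
    intro X _
    by_cases h : DD X i = Z
    · rw [if_pos h]; exact hpos X
    · rw [if_neg h]
  have hinner : ∀ (i : ℕ) (X : Finset G.V),
      ∑ Z : Finset G.V, (if DD X i = Z then π₁ X else 0) = π₁ X := by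
    intro i X
    rw [Finset.sum_ite_eq]
    exact if_pos (Finset.mem_univ _)
  refine ⟨π, hπnn, ?_, ?_, ?_⟩
  · -- total mass
    have : ∑ Z : Finset G.V, π Z =
        (m:ℝ)⁻¹ * ∑ Z : Finset G.V, ∑ i ∈ Finset.range m, ∑ X : Finset G.V,
          (if DD X i = Z then π₁ X else 0) := by
      simp only [hπ]
      rw [Finset.mul_sum]
    rw [this, Finset.sum_comm]
    have : ∑ i ∈ Finset.range m, ∑ Z : Finset G.V, ∑ X : Finset G.V,
        (if DD X i = Z then π₁ X else 0) = ∑ i ∈ Finset.range m, (1:ℝ) := by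
      apply Finset.sum_congr rfl
      intro i _
      rw [Finset.sum_comm]
      calc ∑ X : Finset G.V, ∑ Z : Finset G.V, (if DD X i = Z then π₁ X else 0)
          = ∑ X : Finset G.V, π₁ X := Finset.sum_congr rfl (fun X _ => hinner i X)
        _ = 1 := hsum
    rw [this]
    rw [Finset.sum_const, Finset.card_range, nsmul_eq_mul, mul_one]
    exact inv_mul_cancel₀ (ne_of_gt hm0)
  · -- support
    intro Z hZ
    simp only [hπ] at hZ
    have hsumne : ∑ i ∈ Finset.range m, ∑ X : Finset G.V,
        (if DD X i = Z then π₁ X else 0) ≠ 0 := by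
      intro hc; rw [hc, mul_zero] at hZ; exact hZ rfl
    obtain ⟨i, hi, hine⟩ := Finset.exists_ne_zero_of_sum_ne_zero hsumne
    obtain ⟨X, _, hXne⟩ := Finset.exists_ne_zero_of_sum_ne_zero hine
    have hDDZ : DD X i = Z := by
      by_contra hc; rw [if_neg hc] at hXne; exact hXne rfl
    have hπ₁X : π₁ X ≠ 0 := by
      intro hc; rw [hc, ite_self] at hXne; exact hXne rfl
    have him : i < m := Finset.mem_range.1 hi
    have htwX : (G.del (↑X : Set G.V)).twLE k := hk _ (hmem X hπ₁X)
    have hlevX : levF X = Classical.choose (DOF.core (G.del (↑X : Set G.V)) hΔ htwX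
        (DOF.nf_del G hdegG (↑X : Set G.V))) := by
      rw [hlevF]; simp only []; rw [dif_pos htwX]
    have hspec := Classical.choose_spec (DOF.core (G.del (↑X : Set G.V)) hΔ htwX
        (DOF.nf_del G hdegG (↑X : Set G.V)))
    rw [← hlevX] at hspec
    -- show all components of G - Z are small
    have hXZ : X ⊆ Z := by
      rw [← hDDZ, hDD]; exact Finset.subset_union_left
    have hcmp : ∀ v : G.V,
        (DO.cmp G.G (Finset.univ.filter (fun y => y ∉ Z)) v).card ≤ t := by
      intro v
      set SG := Finset.univ.filter (fun y : G.V => y ∉ Z) with hSG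
      by_cases hv : v ∈ SG
      swap
      · rw [DO.cmp_eq_empty_of_not_mem hv]; simp
      have hvZ : v ∉ Z := (Finset.mem_filter.1 hv).2
      have hvX : v ∉ X := fun hc => hvZ (hXZ hc)
      have hv' : v ∈ ((↑X : Set G.V)ᶜ : Set G.V) := by
        rw [Set.mem_compl_iff, Finset.mem_coe]; exact hvX
      set S' := (@Finset.univ ((G.del (↑X : Set G.V)).V) ((G.del (↑X : Set G.V)).fin)).filter
        (fun x => levF X x % m ≠ i) with hS'
      have havoid : ∀ y ∈ SG, y ∈ ((↑X : Set G.V)ᶜ : Set G.V) := by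
        intro y hy
        rw [Set.mem_compl_iff, Finset.mem_coe]
        exact fun hc => (Finset.mem_filter.1 hy).2 (hXZ hc)
      have hmatch : ∀ (y : G.V) (hy : y ∈ ((↑X : Set G.V)ᶜ : Set G.V)),
          y ∈ SG → (⟨y, hy⟩ : (G.del (↑X : Set G.V)).V) ∈ S' := by
        intro y hy hySG
        rw [hS']; apply Finset.mem_filter.2
        refine ⟨memU X _, fun hc => ?_⟩
        have : y ∈ DD X i := by
          rw [hDD]
          refine Finset.mem_union_right _ (Finset.mem_image.2 ⟨⟨y, hy⟩, ?_, rfl⟩)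
          apply Finset.mem_filter.2
          exact ⟨memU X _, hc⟩
        rw [hDDZ] at this
        exact (Finset.mem_filter.1 hySG).2 this
      have hsub : DO.cmp G.G SG v ⊆
          (DO.cmp (G.del (↑X : Set G.V)).G S' ⟨v, hv'⟩).image Subtype.val := by
        intro u hu
        rw [DO.mem_cmp] at hu
        have huZ : u ∉ Z := (Finset.mem_filter.1 hu.1).2
        have hu' : u ∈ ((↑X : Set G.V)ᶜ : Set G.V) := havoid u hu.1
        obtain ⟨p⟩ := hu.2
        have hr := DOF.rch_up (Gf := G) X S' SG hmatch havoid p hv' hu'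
        refine Finset.mem_image.2 ⟨⟨u, hu'⟩, ?_, rfl⟩
        apply DO.mem_cmp.2
        exact ⟨hmatch u hu' hu.1, hr⟩
      calc (DO.cmp G.G SG v).card
          ≤ ((DO.cmp (G.del (↑X : Set G.V)).G S' ⟨v, hv'⟩).image Subtype.val).card :=
            Finset.card_le_card hsub
        _ ≤ (DO.cmp (G.del (↑X : Set G.V)).G S' ⟨v, hv'⟩).card := Finset.card_image_le
        _ ≤ t := hspec m i him ⟨v, hv'⟩
    intro w
    exact DOF.compSize_le G Z t hcmp w
  · -- thickness
    intro v
    have hne : (m:ℝ) ≠ 0 := ne_of_gt hm0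
    have hstep1 : ∑ Z ∈ Finset.univ.filter (fun Z : Finset G.V => v ∈ Z), π Z =
        (m:ℝ)⁻¹ * ∑ i ∈ Finset.range m, ∑ X : Finset G.V,
          (if v ∈ DD X i then π₁ X else 0) := by
      have e1 : ∑ Z ∈ Finset.univ.filter (fun Z : Finset G.V => v ∈ Z), π Z =
          (m:ℝ)⁻¹ * ∑ Z ∈ Finset.univ.filter (fun Z : Finset G.V => v ∈ Z),
            ∑ i ∈ Finset.range m, ∑ X : Finset G.V, (if DD X i = Z then π₁ X else 0) := by
        simp only [hπ]
        rw [Finset.mul_sum]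
      rw [e1]
      congr 1
      rw [Finset.sum_comm]
      apply Finset.sum_congr rfl
      intro i _
      rw [Finset.sum_comm]
      apply Finset.sum_congr rfl
      intro X _
      rw [Finset.sum_ite_eq]
      by_cases h : v ∈ DD X i
      · rw [if_pos h, if_pos]
        rw [Finset.mem_filter]
        exact ⟨Finset.mem_univ _, h⟩
      · rw [if_neg h, if_neg]
        rw [Finset.mem_filter]
        exact fun hc => h hc.2
    have hXbound : ∀ X : Finset G.V,
        ∑ i ∈ Finset.range m, (if v ∈ DD X i then π₁ X else 0) ≤
          (if v ∈ X then (m:ℝ) * π₁ X else π₁ X) := by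
      intro X
      by_cases hvX : v ∈ X
      · rw [if_pos hvX]
        calc ∑ i ∈ Finset.range m, (if v ∈ DD X i then π₁ X else 0)
            ≤ ∑ _i ∈ Finset.range m, π₁ X := by
              apply Finset.sum_le_sum
              intro i _
              by_cases h : v ∈ DD X i
              · rw [if_pos h]
              · rw [if_neg h]; exact hpos X
          _ = (m:ℝ) * π₁ X := by
              rw [Finset.sum_const, Finset.card_range, nsmul_eq_mul]
      · rw [if_neg hvX]
        have hv' : v ∈ ((↑X : Set G.V)ᶜ : Set G.V) := by
          rw [Set.mem_compl_iff, Finset.mem_coe]; exact hvX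
        set c := levF X ⟨v, hv'⟩ % m with hc
        have hcond : ∀ i, (v ∈ DD X i) ↔ c = i := by
          intro i
          constructor
          · intro h
            rw [hDD] at h
            rcases Finset.mem_union.1 h with h | h
            · exact absurd h hvX
            · obtain ⟨x, hx, hxv⟩ := Finset.mem_image.1 h
              have hxeq : x = ⟨v, hv'⟩ := Subtype.ext hxv
              rw [hxeq] at hx
              replace hx := Finset.mem_filter.1 hx
              rw [hc]
              exact hx.2
          · intro h
            rw [hDD]
            refine Finset.mem_union_right _ (Finset.mem_image.2 ⟨⟨v, hv'⟩, ?_, rfl⟩)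
            apply Finset.mem_filter.2
            exact ⟨memU X _, by rw [← hc]; exact h⟩
        have heq : ∑ i ∈ Finset.range m, (if v ∈ DD X i then π₁ X else 0)
            = ∑ i ∈ Finset.range m, (if c = i then π₁ X else 0) := by
          apply Finset.sum_congr rfl
          intro i _
          exact if_congr (hcond i) rfl rfl
        rw [heq, Finset.sum_ite_eq]
        rw [if_pos]
        exact Finset.mem_range.2 (Nat.mod_lt _ (by omega))
    have hsplit : ∑ X : Finset G.V, (if v ∈ X then (m:ℝ) * π₁ X else π₁ X) =
        (∑ X ∈ Finset.univ.filter (fun X : Finset G.V => v ∈ X), (m:ℝ) * π₁ X) +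
          ∑ X ∈ Finset.univ.filter (fun X : Finset G.V => ¬ v ∈ X), π₁ X :=
      Finset.sum_ite _ _
    have hb1 : ∑ X ∈ Finset.univ.filter (fun X : Finset G.V => v ∈ X), (m:ℝ) * π₁ X
        ≤ (m:ℝ) * (ε/2) := by
      rw [← Finset.mul_sum]
      exact mul_le_mul_of_nonneg_left (hthick v) (le_of_lt hm0)
    have hb2 : ∑ X ∈ Finset.univ.filter (fun X : Finset G.V => ¬ v ∈ X), π₁ X ≤ 1 := by
      rw [← hsum]
      apply Finset.sum_le_sum_of_subset_of_nonneg (Finset.filter_subset _ _)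
      intro X _ _
      exact hpos X
    calc ∑ Z ∈ Finset.univ.filter (fun Z : Finset G.V => v ∈ Z), π Z
        = (m:ℝ)⁻¹ * ∑ i ∈ Finset.range m, ∑ X : Finset G.V,
            (if v ∈ DD X i then π₁ X else 0) := hstep1
      _ = (m:ℝ)⁻¹ * ∑ X : Finset G.V, ∑ i ∈ Finset.range m,
            (if v ∈ DD X i then π₁ X else 0) := by rw [Finset.sum_comm]
      _ ≤ (m:ℝ)⁻¹ * ∑ X : Finset G.V, (if v ∈ X then (m:ℝ) * π₁ X else π₁ X) := by
          apply mul_le_mul_of_nonneg_left _ (inv_nonneg.2 (le_of_lt hm0))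
          exact Finset.sum_le_sum (fun X _ => hXbound X)
      _ ≤ (m:ℝ)⁻¹ * ((m:ℝ) * (ε/2) + 1) := by
          apply mul_le_mul_of_nonneg_left _ (inv_nonneg.2 (le_of_lt hm0))
          rw [hsplit]
          exact add_le_add hb1 hb2
      _ = ε/2 + (m:ℝ)⁻¹ := by
          rw [mul_add, ← mul_assoc, inv_mul_cancel₀ hne, one_mul, mul_one]
      _ ≤ ε := by linarith
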